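/- For a minimax saddle point of positive IRU-sets: if 𝒜, ℬ are compact IRU-sets of strictly positive matrices, Ã ∈ 𝒜 minimizes ρ(A·B̃) over 𝒜, B̃ maximizes min_{A} ρ(A·B) over ℬ, and v > 0 is the Perron eigenvector of Ã·B̃ with eigenvalue ρ̃ = ρ(Ã·B̃), then setting w = B̃·v one has ρ̃·v ≤ A·w for all A ∈ 𝒜 and B·v ≤ w for all B ∈ ℬ. -/

import Mathlib

open Matrix

/-- Spectral radius of a real square matrix: the maximum modulus of its complex eigenvalues. -/
noncomputable def specRad {N : ℕ} (A : Matrix (Fin N) (Fin N) ℝ) : ℝ :=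
  sSup ((fun z : ℂ => ‖z‖) '' spectrum ℂ (A.map (Complex.ofReal)))

/-- The IRU-set (independent row uncertainty set) determined by row sets `rows i ⊆ ℝ^M`:
all `N × M` matrices whose `i`-th row belongs to `rows i`. -/
def IRU {N M : ℕ} (rows : Fin N → Set (Fin M → ℝ)) : Set (Matrix (Fin N) (Fin M) ℝ) :=
  {A | ∀ i, A i ∈ rows i}

attribute [local instance] Matrix.linftyOpNormedRing Matrix.linftyOpNormedAlgebra

lemma specRad_nonneg {N : ℕ} (C : Matrix (Fin N) (Fin N) ℝ) : 0 ≤ specRad C := by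
  apply Real.sSup_nonneg; rintro x ⟨z, _, rfl⟩; exact norm_nonneg z

lemma specRad_bddAbove {N : ℕ} [Nonempty (Fin N)] (C : Matrix (Fin N) (Fin N) ℝ) :
    BddAbove ((fun z : ℂ => ‖z‖) '' spectrum ℂ (C.map (Complex.ofReal))) := by
  refine ⟨‖C.map (Complex.ofReal)‖, ?_⟩
  rintro x ⟨z, hz, rfl⟩
  simpa using spectrum.norm_le_norm_of_mem hz

/-- Collatz–Wielandt upper bound: if `C ≥ 0` and `C v ≤ r v` for some positive `v`,
then `specRad C ≤ r`. -/
lemma specRad_le_of_mulVec_le {N : ℕ} {C : Matrix (Fin N) (Fin N) ℝ}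
    {v : Fin N → ℝ} {r : ℝ} (hC : ∀ i j, 0 ≤ C i j) (hv : ∀ i, 0 < v i) (hr : 0 ≤ r)
    (h : ∀ i, C.mulVec v i ≤ r * v i) : specRad C ≤ r := by
  refine Real.sSup_le ?_ hr
  rintro x ⟨z, hz, rfl⟩
  rw [← AlgEquiv.spectrum_eq (Matrix.toLinAlgEquiv' :
        Matrix (Fin N) (Fin N) ℂ ≃ₐ[ℂ] _),
      ← Module.End.hasEigenvalue_iff_mem_spectrum] at hz
  obtain ⟨x, hx⟩ := hz.exists_hasEigenvector
  have hxe : (C.map Complex.ofReal).mulVec x = z • x := by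
    have := hx.apply_eq_smul
    simpa [Matrix.toLinAlgEquiv'_apply, Matrix.toLin'_apply] using this
  have hx0 := hx.right
  obtain ⟨k0, hk0⟩ : ∃ k, x k ≠ 0 := by
    by_contra hk; push_neg at hk; exact hx0 (funext hk)
  have hne : (Finset.univ : Finset (Fin N)).Nonempty := ⟨k0, Finset.mem_univ _⟩
  obtain ⟨j0, -, hj0⟩ := Finset.exists_max_image Finset.univ (fun j => ‖x j‖ / v j) hne
  set t := ‖x j0‖ / v j0 with htdef
  have ht : ∀ k, ‖x k‖ ≤ t * v k := fun k =>
    (div_le_iff₀ (hv k)).mp (hj0 k (Finset.mem_univ k))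
  have htpos : 0 < t :=
    lt_of_lt_of_le (div_pos (norm_pos_iff.mpr hk0) (hv k0)) (hj0 k0 (Finset.mem_univ k0))
  have hxj0 : ‖x j0‖ = t * v j0 := by
    rw [htdef, div_mul_cancel₀ _ (hv j0).ne']
  have key : ‖z‖ * (t * v j0) ≤ r * (t * v j0) := by
    calc ‖z‖ * (t * v j0) = ‖z * x j0‖ := by rw [norm_mul, hxj0]
      _ = ‖((C.map Complex.ofReal).mulVec x) j0‖ := by rw [hxe]; rfl
      _ = ‖∑ k, (C j0 k : ℂ) * x k‖ := by rfl
      _ ≤ ∑ k, ‖(C j0 k : ℂ) * x k‖ := norm_sum_le _ _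
      _ = ∑ k, C j0 k * ‖x k‖ := by
          refine Finset.sum_congr rfl fun k _ => ?_
          rw [norm_mul, Complex.norm_real, Real.norm_of_nonneg (hC j0 k)]
      _ ≤ ∑ k, C j0 k * (t * v k) := by
          exact Finset.sum_le_sum fun k _ =>
            mul_le_mul_of_nonneg_left (ht k) (hC j0 k)
      _ = t * (C.mulVec v j0) := by
          simp only [Matrix.mulVec, dotProduct, Finset.mul_sum]
          exact Finset.sum_congr rfl fun k _ => by ring
      _ ≤ t * (r * v j0) := mul_le_mul_of_nonneg_left (h j0) htpos.le
      _ = r * (t * v j0) := by ring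
  have := le_of_mul_le_mul_right key (mul_pos htpos (hv j0))
  simpa using this

/-- Collatz–Wielandt lower bound: if `C ≥ 0` and `r v ≤ C v` for some positive `v` and `r ≥ 0`,
then `r ≤ specRad C`.  Proved via Gelfand's formula. -/
lemma le_specRad_of_le_mulVec {N : ℕ} [Nonempty (Fin N)] {C : Matrix (Fin N) (Fin N) ℝ}
    {v : Fin N → ℝ} {r : ℝ} (hC : ∀ i j, 0 ≤ C i j) (hv : ∀ i, 0 < v i) (hr : 0 ≤ r)
    (h : ∀ i, r * v i ≤ C.mulVec v i) : r ≤ specRad C := by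
  have hpow : ∀ m : ℕ, (∀ i j, 0 ≤ (C ^ m) i j) ∧ (∀ i, r ^ m * v i ≤ (C ^ m).mulVec v i) := by
    intro m
    induction m with
    | zero =>
      refine ⟨fun i j => ?_, fun i => by simp⟩
      by_cases hij : i = j <;> simp [Matrix.one_apply, hij]
    | succ m ih =>
      refine ⟨fun i j => ?_, fun i => ?_⟩
      · rw [pow_succ', Matrix.mul_apply]
        exact Finset.sum_nonneg fun k _ => mul_nonneg (hC i k) (ih.1 k j)
      · have hre : C ^ (m + 1) *ᵥ v = C *ᵥ (C ^ m *ᵥ v) := by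
          rw [Matrix.mulVec_mulVec, ← pow_succ']
        rw [hre]
        calc r ^ (m + 1) * v i = r ^ m * (r * v i) := by ring
          _ ≤ r ^ m * (C.mulVec v i) := by
              exact mul_le_mul_of_nonneg_left (h i) (pow_nonneg hr m)
          _ = ∑ k, C i k * (r ^ m * v k) := by
              simp only [Matrix.mulVec, dotProduct, Finset.mul_sum]
              exact Finset.sum_congr rfl fun k _ => by ring
          _ ≤ ∑ k, C i k * ((C ^ m).mulVec v k) := by
              exact Finset.sum_le_sum fun k _ =>
                mul_le_mul_of_nonneg_left (ih.2 k) (hC i k)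
          _ = C.mulVec ((C ^ m).mulVec v) i := rfl
  obtain ⟨i0, -, hi0⟩ := Finset.exists_max_image Finset.univ v Finset.univ_nonempty
  have hnorm : ∀ m : ℕ, r.toNNReal ^ m ≤ ‖(C.map Complex.ofReal) ^ m‖₊ := by
    intro m
    have hmap : (C.map Complex.ofReal) ^ m = (C ^ m).map Complex.ofReal := by
      have := map_pow (Complex.ofRealHom.mapMatrix :
        Matrix (Fin N) (Fin N) ℝ →+* Matrix (Fin N) (Fin N) ℂ) C m
      exact this.symm
    rw [hmap, Matrix.linfty_opNNNorm_def]
    refine le_trans ?_ (Finset.le_sup (Finset.mem_univ i0))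
    have hrow : r ^ m ≤ ∑ j, (C ^ m) i0 j := by
      have h1 : r ^ m * v i0 ≤ (∑ j, (C ^ m) i0 j) * v i0 := by
        refine le_trans ((hpow m).2 i0) ?_
        rw [Finset.sum_mul]
        show ∑ j, (C ^ m) i0 j * v j ≤ _
        exact Finset.sum_le_sum fun j _ =>
          mul_le_mul_of_nonneg_left (hi0 j (Finset.mem_univ j)) ((hpow m).1 i0 j)
      exact le_of_mul_le_mul_right h1 (hv i0)
    rw [← NNReal.coe_le_coe]
    push_cast
    calc (↑(r.toNNReal) : ℝ) ^ m = r ^ m := by rw [Real.coe_toNNReal r hr]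
      _ ≤ ∑ j, (C ^ m) i0 j := hrow
      _ = ∑ j, ‖((C ^ m).map Complex.ofReal) i0 j‖ := by
          refine Finset.sum_congr rfl fun j _ => ?_
          rw [Matrix.map_apply, Complex.norm_real, Real.norm_of_nonneg ((hpow m).1 i0 j)]
  have hgel := spectrum.pow_nnnorm_pow_one_div_tendsto_nhds_spectralRadius
    (C.map Complex.ofReal)
  have hlow : (r.toNNReal : ENNReal) ≤ spectralRadius ℂ (C.map Complex.ofReal) := by
    refine ge_of_tendsto hgel ?_
    filter_upwards [Filter.eventually_ge_atTop 1] with m hm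
    have hm0 : (m : ℝ) ≠ 0 := Nat.cast_ne_zero.mpr (Nat.one_le_iff_ne_zero.mp hm)
    calc (r.toNNReal : ENNReal)
        = ((r.toNNReal : ENNReal) ^ m) ^ (1 / m : ℝ) := by
          rw [← ENNReal.rpow_natCast _ m, ← ENNReal.rpow_mul,
            mul_one_div_cancel hm0, ENNReal.rpow_one]
      _ ≤ (‖(C.map Complex.ofReal) ^ m‖₊ : ENNReal) ^ (1 / m : ℝ) := by
          refine ENNReal.rpow_le_rpow ?_ (by positivity)
          rw [← ENNReal.coe_pow]
          exact ENNReal.coe_le_coe.mpr (hnorm m)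
  have hup : spectralRadius ℂ (C.map Complex.ofReal) ≤ ENNReal.ofReal (specRad C) := by
    refine iSup₂_le fun z hz => ?_
    have habs : ‖z‖ ≤ specRad C :=
      le_csSup (specRad_bddAbove C) ⟨z, hz, rfl⟩
    rw [ENNReal.ofReal]
    refine ENNReal.coe_le_coe.mpr ?_
    rw [← NNReal.coe_le_coe, Real.coe_toNNReal _ (specRad_nonneg C)]
    simpa using habs
  have hfin := hlow.trans hup
  rw [ENNReal.ofReal, ENNReal.coe_le_coe] at hfin
  calc r = (r.toNNReal : ℝ) := (Real.coe_toNNReal r hr).symm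
    _ ≤ ((specRad C).toNNReal : ℝ) := NNReal.coe_le_coe.mpr hfin
    _ = specRad C := Real.coe_toNNReal _ (specRad_nonneg C)

theorem stmt11 {N M : ℕ}
    (rowsA : Fin N → Set (Fin M → ℝ)) (rowsB : Fin M → Set (Fin N → ℝ))
    (hAne : ∀ i, (rowsA i).Nonempty) (hAcomp : ∀ i, IsCompact (rowsA i))
    (hApos : ∀ i, ∀ a ∈ rowsA i, ∀ j, 0 < a j)
    (hBne : ∀ i, (rowsB i).Nonempty) (hBcomp : ∀ i, IsCompact (rowsB i))
    (hBpos : ∀ i, ∀ b ∈ rowsB i, ∀ j, 0 < b j)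
    (Atil : Matrix (Fin N) (Fin M) ℝ) (hAtil : Atil ∈ IRU rowsA)
    (Btil : Matrix (Fin M) (Fin N) ℝ) (hBtil : Btil ∈ IRU rowsB)
    (hmin : ∀ A ∈ IRU rowsA, specRad (Atil * Btil) ≤ specRad (A * Btil))
    (hmax : ∀ B ∈ IRU rowsB,
      sInf ((fun A => specRad (A * B)) '' IRU rowsA) ≤
        sInf ((fun A => specRad (A * Btil)) '' IRU rowsA))
    (v : Fin N → ℝ) (hvpos : ∀ i, 0 < v i)
    (hev : (Atil * Btil).mulVec v = specRad (Atil * Btil) • v) :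
    (∀ A ∈ IRU rowsA, ∀ i, specRad (Atil * Btil) * v i ≤ A.mulVec (Btil.mulVec v) i) ∧
      (∀ B ∈ IRU rowsB, ∀ i, B.mulVec v i ≤ Btil.mulVec v i) := by
  set ρ := specRad (Atil * Btil) with hρdef
  have hρ0 : 0 ≤ ρ := specRad_nonneg _
  -- Part 1
  have part1 : ∀ A ∈ IRU rowsA, ∀ i, ρ * v i ≤ A.mulVec (Btil.mulVec v) i := by
    intro A hA i
    by_contra hcon
    push_neg at hcon
    haveI : Nonempty (Fin N) := ⟨i⟩
    set w := Btil.mulVec v with hwdef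
    -- if M = 0, everything degenerates
    haveI hM : Nonempty (Fin M) := by
      rcases isEmpty_or_nonempty (Fin M) with hM | hM
      · exfalso
        have h1 : A.mulVec w i = 0 := by simp [Matrix.mulVec, dotProduct]
        have h2 : (Atil * Btil).mulVec v i = 0 := by
          simp [Matrix.mulVec, dotProduct, Matrix.mul_apply]
        have h3 : ρ * v i = 0 := by
          have := congrFun hev i
          rw [h2] at this
          exact this.symm
        rw [h1, h3] at hcon
        exact lt_irrefl _ hcon
      · exact hM
    have hwpos : ∀ k, 0 < w k := by
      intro k
      show 0 < ∑ j, Btil k j * v j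
      refine Finset.sum_pos (fun j _ => ?_) Finset.univ_nonempty
      exact mul_pos (hBpos k (Btil k) (hBtil k) j) (hvpos j)
    set A' : Matrix (Fin N) (Fin M) ℝ :=
      Matrix.of (fun j => if j = i then A i else Atil j) with hA'def
    have hA'row : ∀ j, A' j = if j = i then A i else Atil j := fun _ => rfl
    have hA'mem : A' ∈ IRU rowsA := by
      intro j
      rw [hA'row]
      by_cases hj : j = i
      · subst hj; rw [if_pos rfl]; exact hA j
      · rw [if_neg hj]; exact hAtil j
    set C := A' * Btil with hCdef
    have hCpos : ∀ j k, 0 < C j k := by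
      intro j k
      rw [hCdef, Matrix.mul_apply]
      refine Finset.sum_pos (fun l _ => ?_) Finset.univ_nonempty
      exact mul_pos (hApos j (A' j) (hA'mem j) l) (hBpos l (Btil l) (hBtil l) k)
    have hCval : ∀ j, C.mulVec v j = if j = i then A.mulVec w i else ρ * v j := by
      intro j
      have hCv : C.mulVec v j = A' j ⬝ᵥ w := by
        rw [hCdef, ← Matrix.mulVec_mulVec]; rfl
      by_cases hj : j = i
      · subst hj
        rw [if_pos rfl, hCv, hA'row, if_pos rfl]
        rfl
      · rw [if_neg hj, hCv, hA'row, if_neg hj]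
        show (Atil *ᵥ w) j = ρ * v j
        rw [hwdef, Matrix.mulVec_mulVec, hev]
        rfl
    have hCvle : ∀ j, C.mulVec v j ≤ ρ * v j := by
      intro j
      rw [hCval j]
      by_cases hj : j = i
      · subst hj; simp only [if_pos rfl]; exact hcon.le
      · simp [hj]
    have hCvi : C.mulVec v i < ρ * v i := by
      rw [hCval i]; simpa using hcon
    set u := C.mulVec v with hudef
    have hupos : ∀ j, 0 < u j := by
      intro j
      show 0 < ∑ k, C j k * v k
      refine Finset.sum_pos (fun k _ => ?_) Finset.univ_nonempty
      exact mul_pos (hCpos j k) (hvpos k)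
    have hCu : ∀ j, C.mulVec u j < ρ * u j := by
      intro j
      have hL : C.mulVec u j = ∑ k, C j k * u k := rfl
      have hR : ρ * u j = ∑ k, C j k * (ρ * v k) := by
        rw [hudef]
        show ρ * ∑ k, C j k * v k = _
        rw [Finset.mul_sum]
        exact Finset.sum_congr rfl fun k _ => by ring
      rw [hL, hR]
      refine Finset.sum_lt_sum (fun k _ => ?_) ⟨i, Finset.mem_univ i, ?_⟩
      · exact mul_le_mul_of_nonneg_left (hCvle k) (hCpos j k).le
      · exact mul_lt_mul_of_pos_left hCvi (hCpos j i)
    set s := Finset.univ.sup' Finset.univ_nonempty (fun j => C.mulVec u j / u j) with hsdef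
    have hs1 : ∀ j, C.mulVec u j ≤ s * u j := fun j =>
      (div_le_iff₀ (hupos j)).mp
        (Finset.le_sup' (fun j => C.mulVec u j / u j) (Finset.mem_univ j))
    have hslt : s < ρ := by
      rw [hsdef, Finset.sup'_lt_iff]
      intro j _
      exact (div_lt_iff₀ (hupos j)).mpr (by linarith [hCu j])
    have hs0 : 0 ≤ s := by
      refine le_trans ?_ (Finset.le_sup' (fun j => C.mulVec u j / u j) (Finset.mem_univ i))
      have h0 : 0 ≤ C.mulVec u i := by
        show 0 ≤ ∑ k, C i k * u k
        exact Finset.sum_nonneg fun k _ => mul_nonneg (hCpos i k).le (hupos k).le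
      exact div_nonneg h0 (hupos i).le
    have hle : specRad C ≤ s :=
      specRad_le_of_mulVec_le (fun j k => (hCpos j k).le) hupos hs0 hs1
    have hge : ρ ≤ specRad C := hmin A' hA'mem
    linarith
  refine ⟨part1, ?_⟩
  -- Part 2
  intro B hB i
  by_contra hcon
  push_neg at hcon
  haveI hM : Nonempty (Fin M) := ⟨i⟩
  haveI hN : Nonempty (Fin N) := by
    rcases isEmpty_or_nonempty (Fin N) with hN | hN
    · exfalso
      have h1 : B.mulVec v i = 0 := by simp [Matrix.mulVec, dotProduct]
      have h2 : Btil.mulVec v i = 0 := by simp [Matrix.mulVec, dotProduct]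
      rw [h1, h2] at hcon
      exact lt_irrefl _ hcon
    · exact hN
  set B' : Matrix (Fin M) (Fin N) ℝ :=
    Matrix.of (fun j => if j = i then B i else Btil j) with hB'def
  have hB'row : ∀ j, B' j = if j = i then B i else Btil j := fun _ => rfl
  have hB'mem : B' ∈ IRU rowsB := by
    intro j
    rw [hB'row]
    by_cases hj : j = i
    · subst hj; rw [if_pos rfl]; exact hB j
    · rw [if_neg hj]; exact hBtil j
  set δ := B.mulVec v i - Btil.mulVec v i with hδdef
  have hδ : 0 < δ := by rw [hδdef]; linarith
  have hB'v : ∀ k, B'.mulVec v k = Btil.mulVec v k + (if k = i then δ else 0) := by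
    intro k
    have hBv : B'.mulVec v k = B' k ⬝ᵥ v := rfl
    by_cases hk : k = i
    · subst hk
      rw [hBv, hB'row, if_pos rfl, if_pos rfl]
      show (B *ᵥ v) k = (Btil *ᵥ v) k + ((B *ᵥ v) k - (Btil *ᵥ v) k)
      ring
    · rw [hBv, hB'row, if_neg hk, if_neg hk, add_zero]
      rfl
  -- uniform positive lower bound on column i of matrices in IRU rowsA
  have hcex : ∀ j : Fin N, ∃ c : ℝ, 0 < c ∧ ∀ a ∈ rowsA j, c ≤ a i := by
    intro j
    obtain ⟨a₀, ha₀, hmin₀⟩ := (hAcomp j).exists_isMinOn (hAne j)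
      ((continuous_apply i).continuousOn)
    exact ⟨a₀ i, hApos j a₀ ha₀ i, fun a ha => hmin₀ ha⟩
  choose cf hcfpos hcfle using hcex
  set c := Finset.univ.inf' Finset.univ_nonempty cf with hcdef
  have hcpos : 0 < c := by
    rw [hcdef, Finset.lt_inf'_iff]
    exact fun j _ => hcfpos j
  have hcle : ∀ (j : Fin N) (A : Matrix (Fin N) (Fin M) ℝ), A ∈ IRU rowsA → c ≤ A j i :=
    fun j A hA => le_trans (Finset.inf'_le cf (Finset.mem_univ j)) (hcfle j (A j) (hA j))
  set V := Finset.univ.sup' Finset.univ_nonempty v with hVdef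
  have hV : 0 < V :=
    lt_of_lt_of_le (hvpos (Classical.arbitrary _))
      (Finset.le_sup' v (Finset.mem_univ _))
  have hvV : ∀ j, v j ≤ V := fun j => Finset.le_sup' v (Finset.mem_univ j)
  set r := ρ + c * δ / V with hrdef
  have hρr : ρ < r := by
    rw [hrdef]
    have : 0 < c * δ / V := by positivity
    linarith
  have hr0 : 0 ≤ r := le_trans hρ0 hρr.le
  have key : ∀ A ∈ IRU rowsA, r ≤ specRad (A * B') := by
    intro A hA
    have hABpos : ∀ j k, 0 ≤ (A * B') j k := by
      intro j k
      rw [Matrix.mul_apply]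
      refine Finset.sum_nonneg fun l _ => ?_
      exact (mul_pos (hApos j (A j) (hA j) l) (hBpos l (B' l) (hB'mem l) k)).le
    refine le_specRad_of_le_mulVec hABpos hvpos hr0 ?_
    intro j
    have hsplit : (A * B').mulVec v j = A.mulVec (Btil.mulVec v) j + A j i * δ := by
      rw [← Matrix.mulVec_mulVec]
      show ∑ k, A j k * (B'.mulVec v k) = _
      simp only [hB'v, mul_add, Finset.sum_add_distrib, mul_ite, mul_zero]
      rw [Finset.sum_ite_eq' Finset.univ i (fun k => A j k * δ)]
      simp [Matrix.mulVec, dotProduct]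
    rw [hsplit]
    have h1 := part1 A hA j
    have h2 : c * δ ≤ A j i * δ := mul_le_mul_of_nonneg_right (hcle j A hA) hδ.le
    have h3 : c * δ / V * v j ≤ c * δ := by
      rw [div_mul_eq_mul_div, div_le_iff₀ hV]
      exact mul_le_mul_of_nonneg_left (hvV j) (by positivity)
    calc r * v j = ρ * v j + c * δ / V * v j := by rw [hrdef]; ring
      _ ≤ A.mulVec (Btil.mulVec v) j + A j i * δ :=
          add_le_add h1 (h3.trans h2)
  have himgne : ((fun A => specRad (A * B')) '' IRU rowsA).Nonempty :=
    ⟨_, Atil, hAtil, rfl⟩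
  have h4 : r ≤ sInf ((fun A => specRad (A * B')) '' IRU rowsA) := by
    refine le_csInf himgne ?_
    rintro x ⟨A, hA, rfl⟩
    exact key A hA
  have h5 : sInf ((fun A => specRad (A * Btil)) '' IRU rowsA) ≤ ρ := by
    refine csInf_le ⟨ρ, ?_⟩ ⟨Atil, hAtil, rfl⟩
    rintro x ⟨A, hA, rfl⟩
    exact hmin A hA
  have := (h4.trans (hmax B' hB'mem)).trans h5
  exact absurd this (not_le.mpr hρr)
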